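/- Let 𝒜 be a finite set with |𝒜| = A, let T ≥ 1 with A ≤ T, and let ℓ_1, …, ℓ_T ∈ ℝ^𝒜. Let η_t(a) > 0 for t = 0, …, T and a ∈ 𝒜 be non-increasing in t for each a, with η_0(a) = η_0 for all a. For t = 0, …, T let ψ_t(p) = Σ_{a∈𝒜} (1/η_t(a)) p(a) ln p(a), and for t = 1, …, T let p_t be a minimizer over Δ(𝒜) of p ↦ ⟨p, Σ_{τ=1}^{t−1} ℓ_τ⟩ + ψ_t(p); assume p_t(a) > 0 for all t, a. Suppose η_t(a) ℓ_t(a) ≥ −1 for all t, a. Then for every u ∈ Δ(𝒜), Σ_{t=1}^{T} ⟨p_t − u, ℓ_t⟩ ≤ (ln A)/η_0 + 6 Σ_{t=1}^{T} Σ_{a∈𝒜} (1/η_t(a) − 1/η_{t−1}(a)) ξ_t(a) + Σ_{t=1}^{T} Σ_{a∈𝒜} η_t(a) p_t(a) ℓ_t(a)² + (1/T²) Σ_{t=1}^{T} ⟨−u + (1/A)𝟏, ℓ_t⟩, where ξ_t(a) = min{ p_t(a) ln T, 1 − p_t(a) } and 𝟏 ∈ ℝ^𝒜 is the all-ones vector.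 -/

import Mathlib

open Finset

lemma aux_exp_quad (y : ℝ) (hy : y ≤ 1) : Real.exp y ≤ 1 + y + y ^ 2 := by
  rcases le_or_gt y (-1) with h | h
  · have h1 : Real.exp y ≤ Real.exp (-1) := Real.exp_le_exp.2 h
    have h2 : Real.exp (-1) ≤ 3/4 := by
      rw [Real.exp_neg, inv_le_comm₀ (Real.exp_pos 1) (by norm_num)]
      have := Real.add_one_le_exp (1:ℝ); linarith
    nlinarith [sq_nonneg (y + 1/2)]
  · have habs : |y| ≤ 1 := abs_le.2 ⟨le_of_lt h, hy⟩
    have hb := Real.exp_bound habs (n := 3) (by norm_num)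
    have hsum : ∑ m ∈ Finset.range 3, y ^ m / (m.factorial : ℝ) = 1 + y + y^2/2 := by
      simp [Finset.sum_range_succ, Nat.factorial]
    rw [hsum] at hb
    have h3 : |y|^3 ≤ y^2 := by
      have := pow_le_pow_of_le_one (abs_nonneg y) habs (by norm_num : 2 ≤ 3)
      rwa [sq_abs] at this
    have h4 : |y| ^ 3 * (↑(Nat.succ 3) / (↑(Nat.factorial 3) * ↑(3:ℕ))) ≤ 2/9 * y^2 := by
      have he : ((Nat.succ 3 : ℝ) / ((Nat.factorial 3 : ℝ) * (3:ℕ))) = 2/9 := by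
        simp [Nat.factorial]; norm_num
      rw [he]; linarith
    have h5 := (abs_le.1 hb).2
    nlinarith [sq_nonneg y]

lemma aux_stab (p q η ℓ : ℝ) (hp : 0 < p) (hq : 0 ≤ q) (hη : 0 < η)
    (hx : -1 ≤ η * ℓ) :
    (p - q) * ℓ - (1/η) * (q * (Real.log q - Real.log p) - q + p) ≤ η * p * ℓ ^ 2 := by
  have key : (p - q) * ℓ - (1/η) * (q * (Real.log q - Real.log p) - q + p)
      ≤ (1/η) * p * (Real.exp (-(η*ℓ)) - 1 + η*ℓ) := by
    rcases eq_or_lt_of_le hq with rfl | hq'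
    · have e1 : (p - 0) * ℓ - (1/η) * (0 * (Real.log 0 - Real.log p) - 0 + p)
          = (1/η) * p * (-1 + η*ℓ) := by field_simp; ring
      rw [e1]
      have hexp : 0 ≤ Real.exp (-(η*ℓ)) := (Real.exp_pos _).le
      have hpη : 0 ≤ (1/η) * p := by positivity
      nlinarith
    · have hz := Real.add_one_le_exp (-(η*ℓ) - Real.log (q/p))
      have hlog : Real.log (q/p) = Real.log q - Real.log p :=
        Real.log_div (ne_of_gt hq') (ne_of_gt hp)
      have hexp : Real.exp (-(η*ℓ) - Real.log (q/p)) = Real.exp (-(η*ℓ)) * (p/q) := by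
        rw [Real.exp_sub, Real.exp_log (by positivity), div_div_eq_mul_div]
        field_simp
      rw [hexp, hlog] at hz
      have h2 : (q/η) * ((-(η*ℓ) - (Real.log q - Real.log p)) + 1)
          ≤ (q/η) * (Real.exp (-(η*ℓ)) * (p/q)) :=
        mul_le_mul_of_nonneg_left hz (by positivity)
      have h3 : (q/η) * (Real.exp (-(η*ℓ)) * (p/q)) = 1/η * p * Real.exp (-(η*ℓ)) := by
        field_simp
      rw [h3] at h2
      have e1 : (p - q) * ℓ - (1/η) * (q * (Real.log q - Real.log p) - q + p)
          = (q/η) * ((-(η*ℓ) - (Real.log q - Real.log p)) + 1) + p*ℓ - p/η := by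
        field_simp; ring
      have e2 : (1/η) * p * (Real.exp (-(η*ℓ)) - 1 + η*ℓ)
          = 1/η * p * Real.exp (-(η*ℓ)) + p*ℓ - p/η := by
        field_simp; ring
      rw [e1, e2]; linarith
  have h4 : Real.exp (-(η*ℓ)) - 1 + η*ℓ ≤ (η*ℓ)^2 := by
    have := aux_exp_quad (-(η*ℓ)) (by linarith)
    nlinarith
  calc (p - q) * ℓ - (1/η) * (q * (Real.log q - Real.log p) - q + p)
      ≤ (1/η) * p * (Real.exp (-(η*ℓ)) - 1 + η*ℓ) := key
    _ ≤ (1/η) * p * (η*ℓ)^2 := mul_le_mul_of_nonneg_left h4 (by positivity)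
    _ = η * p * ℓ^2 := by field_simp

lemma aux_nh_le (p : ℝ) (hp : 0 < p) : -(p * Real.log p) ≤ 1 - p := by
  have h := Real.log_le_sub_one_of_pos (show 0 < 1/p by positivity)
  rw [Real.log_div one_ne_zero (ne_of_gt hp), Real.log_one] at h
  have := mul_le_mul_of_nonneg_left h hp.le
  have e : p * (1/p - 1) = 1 - p := by field_simp
  nlinarith

set_option maxHeartbeats 2000000
/-- `p(1-p) ≤ -p log p` for `0 < p`. -/

lemma aux_nh_ge (p : ℝ) (hp : 0 < p) : p * (1 - p) ≤ -(p * Real.log p) := by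
  have h := Real.log_le_sub_one_of_pos hp
  nlinarith

/-- penalty per-coordinate: for `T ≥ 2`, `0 < p ≤ 1`:
`-p log p ≤ 6 * min (p log T) (1-p) + 1/T^6`. -/

lemma aux_pen (T : ℕ) (hT : 2 ≤ T) (p : ℝ) (hp : 0 < p) (hp1 : p ≤ 1) :
    -(p * Real.log p) ≤ 6 * min (p * Real.log T) (1 - p) + 1 / (T:ℝ)^6 := by
  have hT1 : (1:ℝ) ≤ (T:ℝ) := by exact_mod_cast Nat.one_le_of_lt hT
  have hTpos : (0:ℝ) < (T:ℝ) := by linarith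
  have hT6 : (0:ℝ) < (T:ℝ)^6 := by positivity
  rcases min_cases (p * Real.log T) (1 - p) with ⟨hmin, hle⟩ | ⟨hmin, hle⟩
  · -- min = p log T, and p log T ≤ 1 - p
    rw [hmin]
    rcases le_or_gt ((T:ℝ)^6)⁻¹ p with h | h
    · -- p ≥ T^{-6} : -log p ≤ 6 log T
      have hlog : -Real.log p ≤ 6 * Real.log T := by
        have h1 : Real.log (((T:ℝ)^6)⁻¹) ≤ Real.log p := Real.log_le_log (by positivity) h
        rw [Real.log_inv, Real.log_pow] at h1
        push_cast at h1
        linarith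
      have := mul_le_mul_of_nonneg_left hlog hp.le
      have hpos : 0 ≤ 1/(T:ℝ)^6 := by positivity
      nlinarith
    · -- p < T^{-6}: -p log p = T^{-6} q log(1/q) form; bound by 1/T^6 directly
      -- -p log p ≤ p * (-log p); with q = p*T^6 < 1: -p log p = p*(-log q + 6 log T)
      set q := p * (T:ℝ)^6 with hq
      have hq0 : 0 < q := by positivity
      have hq1 : q < 1 := by
        rw [hq]
        calc p * (T:ℝ)^6 < ((T:ℝ)^6)⁻¹ * (T:ℝ)^6 := by
              apply mul_lt_mul_of_pos_right h hT6
          _ = 1 := by field_simp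
      have hlogp : Real.log p = Real.log q - 6 * Real.log T := by
        rw [hq, Real.log_mul (ne_of_gt hp) (by positivity), Real.log_pow]
        push_cast; ring
      -- -p log p = -p log q + 6 p log T
      have hkey : -(q * Real.log q) ≤ 1 := by
        have := aux_nh_le q hq0
        linarith
      -- -p log q = -(q log q)/T^6 ≤ 1/T^6
      have e : -(p * Real.log q) = -(q * Real.log q) / (T:ℝ)^6 := by
        rw [hq]; field_simp
      have h2 : -(p * Real.log q) ≤ 1 / (T:ℝ)^6 := by
        rw [e]
        exact div_le_div_of_nonneg_right hkey hT6.le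
      have hlogT : 0 ≤ Real.log T := Real.log_nonneg hT1
      have h3 : 0 ≤ p * Real.log T := by positivity
      nlinarith [hlogp]
  · -- min = 1 - p
    rw [hmin]
    have := aux_nh_le p hp
    have hpos : 0 ≤ 1/(T:ℝ)^6 := by positivity
    nlinarith

lemma aux_opt {𝒜 : Type*} [Fintype 𝒜] (C β pv q : 𝒜 → ℝ)
    (hβ : ∀ a, 0 < β a) (hp : ∀ a, 0 < pv a) (hps : ∑ a, pv a = 1)
    (hq : ∀ a, 0 ≤ q a) (hqs : ∑ a, q a = 1)
    (hmin : ∀ r : 𝒜 → ℝ, (∀ a, 0 ≤ r a) → ∑ a, r a = 1 →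
      (∑ a, pv a * C a) + ∑ a, β a * (pv a * Real.log (pv a))
        ≤ (∑ a, r a * C a) + ∑ a, β a * (r a * Real.log (r a))) :
    (∑ a, pv a * C a) + ∑ a, β a * (pv a * Real.log (pv a))
      + ∑ a, β a * (q a * (Real.log (q a) - Real.log (pv a)) - q a + pv a)
      ≤ (∑ a, q a * C a) + ∑ a, β a * (q a * Real.log (q a)) := by
  classical
  set d : 𝒜 → ℝ := fun a => q a - pv a with hd
  set g : ℝ → ℝ := fun s => ∑ a, ((pv a + s * d a) * C a
      + β a * ((pv a + s * d a) * Real.log (pv a + s * d a))) with hgdef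
  set g' : ℝ := ∑ a, ((d a) * C a + β a * ((Real.log (pv a) + 1) * d a)) with hg'def
  -- derivative
  have hg : HasDerivAt g g' 0 := by
    rw [hgdef, hg'def]
    apply HasDerivAt.fun_sum
    intro a _
    have hlin : HasDerivAt (fun s : ℝ => pv a + s * d a) (d a) 0 := by
      simpa using ((hasDerivAt_id (0:ℝ)).mul_const (d a)).const_add (pv a)
    have hne : pv a + (0:ℝ) * d a ≠ 0 := by
      have := hp a; simp; linarith
    have hxlog := (Real.hasDerivAt_mul_log hne).comp (0:ℝ) hlin
    have hmul := hlin.mul_const (C a)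
    have := hmul.add ((hxlog.const_mul (β a)))
    simp [Function.comp] at this; exact this
  -- minimality along the segment
  have hmono : ∀ s ∈ Set.Ioo (0:ℝ) 1, g 0 ≤ g s := by
    intro s hs
    have hr0 : ∀ a, 0 ≤ pv a + s * d a := by
      intro a
      have := hp a; have := hq a
      have : pv a + s * d a = (1 - s) * pv a + s * q a := by rw [hd]; ring
      rw [this]
      have h1 : 0 ≤ (1 - s) * pv a := mul_nonneg (by linarith [hs.2]) (hp a).le
      have h2 : 0 ≤ s * q a := mul_nonneg (le_of_lt hs.1) (hq a)
      linarith
    have hr1 : ∑ a, (pv a + s * d a) = 1 := by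
      rw [Finset.sum_add_distrib, ← Finset.mul_sum, hd]
      simp only [Finset.sum_sub_distrib, hqs, hps]
      ring
    have := hmin (fun a => pv a + s * d a) hr0 hr1
    have hg0 : g 0 = (∑ a, pv a * C a) + ∑ a, β a * (pv a * Real.log (pv a)) := by
      rw [hgdef]; simp [Finset.sum_add_distrib]
    have hgs : g s = (∑ a, (pv a + s * d a) * C a)
        + ∑ a, β a * ((pv a + s * d a) * Real.log (pv a + s * d a)) := by
      rw [hgdef]; simp [Finset.sum_add_distrib]
    rw [hg0, hgs]; exact this
  -- derivative nonneg
  have hg'nonneg : 0 ≤ g' := by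
    have hslope := hasDerivAt_iff_tendsto_slope.mp hg
    have htend : Filter.Tendsto (slope g 0) (nhdsWithin 0 (Set.Ioi 0)) (nhds g') :=
      hslope.mono_left (nhdsWithin_mono 0 (fun x hx => by
        simp only [Set.mem_compl_iff, Set.mem_singleton_iff]
        exact ne_of_gt hx))
    apply ge_of_tendsto htend
    apply Filter.eventually_of_mem (Ioo_mem_nhdsGT_of_mem (Set.mem_Ico.2 ⟨le_refl 0, zero_lt_one⟩))
    intro s hs
    rw [slope_def_field]
    have h1 : g 0 ≤ g s := hmono s hs
    have h2 : (0:ℝ) < s - 0 := by simpa using hs.1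
    exact div_nonneg (by linarith) h2.le
  -- expansion identity
  have hiden : (∑ a, q a * C a) + ∑ a, β a * (q a * Real.log (q a))
      = ((∑ a, pv a * C a) + ∑ a, β a * (pv a * Real.log (pv a))) + g'
        + ∑ a, β a * (q a * (Real.log (q a) - Real.log (pv a)) - q a + pv a) := by
    rw [hg'def, hd]
    rw [← Finset.sum_add_distrib, ← Finset.sum_add_distrib, ← Finset.sum_add_distrib,
      ← Finset.sum_add_distrib]
    apply Finset.sum_congr rfl
    intro a _
    ring
  linarith [hg'nonneg, hiden]

lemma aux_ent {𝒜 : Type*} [Fintype 𝒜] (A : ℕ) (hA : Fintype.card 𝒜 = A) (hApos : 0 < A)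
    (pv : 𝒜 → ℝ) (hp : ∀ a, 0 < pv a) (hps : ∑ a, pv a = 1) :
    ∑ a, -(pv a * Real.log (pv a)) ≤ Real.log A := by
  have hA' : (0:ℝ) < (A:ℝ) := by exact_mod_cast hApos
  have per : ∀ a, -(pv a * Real.log (pv a)) ≤ pv a * Real.log A + 1/A - pv a := by
    intro a
    have hpa := hp a
    have h := Real.log_le_sub_one_of_pos (show (0:ℝ) < 1/((A:ℝ) * pv a) by positivity)
    rw [one_div, Real.log_inv, Real.log_mul (ne_of_gt hA') (ne_of_gt hpa)] at h
    have h2 := mul_le_mul_of_nonneg_left h hpa.le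
    have e : pv a * (((A:ℝ) * pv a)⁻¹ - 1) = 1/A - pv a := by field_simp
    rw [e] at h2
    nlinarith
  calc ∑ a, -(pv a * Real.log (pv a)) ≤ ∑ a, (pv a * Real.log A + 1/(A:ℝ) - pv a) :=
        Finset.sum_le_sum (fun a _ => per a)
    _ = Real.log A := by
        rw [Finset.sum_sub_distrib, Finset.sum_add_distrib, ← Finset.sum_mul, hps,
          Finset.sum_const, Finset.card_univ, hA]
        rw [nsmul_eq_mul, mul_one_div_cancel (ne_of_gt hA')]; ring

lemma aux_tel (b : ℕ → ℝ) (T : ℕ) : ∑ t ∈ Finset.Icc 1 T, (b t - b (t-1)) = b T - b 0 := by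
  induction T with
  | zero => simp
  | succ n ih =>
      rw [Finset.sum_Icc_succ_top (Nat.le_add_left 1 n), ih]
      simp
/-- **FTRL with the Shannon entropy regularizer and coordinate-wise learning rates.**
Let `|𝒜| = A ≤ T`, `T ≥ 1`, losses `ℓ 1, …, ℓ T`, and learning rates `η t a > 0`
non-increasing in `t` with `η 0 a = η₀` for all `a`.  With
`ψ t p = ∑ a, (1 / η t a) * (p a * log (p a))`, let `p t` (for `1 ≤ t ≤ T`) minimize
`p ↦ ⟨p, ∑_{τ=1}^{t-1} ℓ τ⟩ + ψ t p` over the probability simplex, with all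
coordinates strictly positive.  If `η t a * ℓ t a ≥ -1` for all `t, a`, then for every
`u` in the probability simplex,
`∑_{t=1}^T ⟨p t - u, ℓ t⟩ ≤ (ln A)/η₀ + 6 ∑_t ∑_a (1/η t a - 1/η (t-1) a) ξ t a
  + ∑_t ∑_a η t a * p t a * (ℓ t a)² + (1/T²) ∑_t ⟨-u + (1/A) 𝟏, ℓ t⟩`,
where `ξ t a = min (p t a * ln T) (1 - p t a)`. -/
theorem shannon_ftrl_regret
    {𝒜 : Type*} [Fintype 𝒜] (A : ℕ) (hA : Fintype.card 𝒜 = A)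
    (T : ℕ) (hT : 1 ≤ T) (hAT : A ≤ T)
    (ℓ : ℕ → 𝒜 → ℝ)
    (η : ℕ → 𝒜 → ℝ) (η₀ : ℝ)
    (hη_pos : ∀ t ≤ T, ∀ a, 0 < η t a)
    (hη_mono : ∀ t, 1 ≤ t → t ≤ T → ∀ a, η t a ≤ η (t - 1) a)
    (hη_init : ∀ a, η 0 a = η₀)
    (ψ : ℕ → (𝒜 → ℝ) → ℝ)
    (hψ : ∀ t, ψ t = fun p : 𝒜 → ℝ => ∑ a, (1 / η t a) * (p a * Real.log (p a)))
    (p : ℕ → 𝒜 → ℝ)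
    (hp_pos : ∀ t, 1 ≤ t → t ≤ T → ∀ a, 0 < p t a)
    (hp_sum : ∀ t, 1 ≤ t → t ≤ T → ∑ a, p t a = 1)
    (hp_min : ∀ t, 1 ≤ t → t ≤ T → ∀ q : 𝒜 → ℝ, (∀ a, 0 ≤ q a) → ∑ a, q a = 1 →
      (∑ a, p t a * (∑ τ ∈ Finset.Icc 1 (t - 1), ℓ τ a)) + ψ t (p t)
        ≤ (∑ a, q a * (∑ τ ∈ Finset.Icc 1 (t - 1), ℓ τ a)) + ψ t q)
    (hℓ : ∀ t, 1 ≤ t → t ≤ T → ∀ a, η t a * ℓ t a ≥ -1)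
    (ξ : ℕ → 𝒜 → ℝ)
    (hξ : ∀ t a, ξ t a = min (p t a * Real.log T) (1 - p t a))
    (u : 𝒜 → ℝ) (hu_nonneg : ∀ a, 0 ≤ u a) (hu_sum : ∑ a, u a = 1) :
    ∑ t ∈ Finset.Icc 1 T, ∑ a, (p t a - u a) * ℓ t a
      ≤ Real.log A / η₀
        + 6 * ∑ t ∈ Finset.Icc 1 T, ∑ a, (1 / η t a - 1 / η (t - 1) a) * ξ t a
        + ∑ t ∈ Finset.Icc 1 T, ∑ a, η t a * p t a * ℓ t a ^ 2
        + (1 / (T : ℝ) ^ 2) * ∑ t ∈ Finset.Icc 1 T, ∑ a, (-(u a) + 1 / A) * ℓ t a := by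
  classical
  have hψ' : ∀ t (q : 𝒜 → ℝ), ψ t q = ∑ a, (1 / η t a) * (q a * Real.log (q a)) := by
    intro t q; rw [hψ]
  rcases isEmpty_or_nonempty 𝒜 with hE | hNE
  · rw [Finset.univ_eq_empty, Finset.sum_empty] at hu_sum; norm_num at hu_sum
  have hApos : 0 < A := hA ▸ Fintype.card_pos
  have hη₀pos : 0 < η₀ := by
    rw [← hη_init (Classical.arbitrary 𝒜)]
    exact hη_pos 0 (Nat.zero_le T) _
  rcases eq_or_lt_of_le (show 1 ≤ A from hApos) with hA1 | hA2
  · -- A = 1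
    obtain ⟨a₀, ha₀⟩ := Fintype.card_eq_one_iff.mp (by rw [hA, ← hA1])
    have huniv : (Finset.univ : Finset 𝒜) = {a₀} :=
      Finset.eq_singleton_iff_unique_mem.mpr ⟨Finset.mem_univ a₀, fun x _ => ha₀ x⟩
    have hsum1 : ∀ f : 𝒜 → ℝ, ∑ a, f a = f a₀ := fun f => by rw [huniv, Finset.sum_singleton]
    have hu1 : u a₀ = 1 := (hsum1 u).symm.trans hu_sum
    have hp1 : ∀ t, 1 ≤ t → t ≤ T → p t a₀ = 1 :=
      fun t h1 h2 => (hsum1 (p t)).symm.trans (hp_sum t h1 h2)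
    have hLHS : ∑ t ∈ Finset.Icc 1 T, ∑ a, (p t a - u a) * ℓ t a = 0 := by
      apply Finset.sum_eq_zero; intro t ht
      rw [Finset.mem_Icc] at ht
      rw [hsum1, hp1 t ht.1 ht.2, hu1]; ring
    have h2 : ∑ t ∈ Finset.Icc 1 T, ∑ a, (1 / η t a - 1 / η (t - 1) a) * ξ t a = 0 := by
      apply Finset.sum_eq_zero; intro t ht
      rw [Finset.mem_Icc] at ht
      rw [hsum1, hξ, hp1 t ht.1 ht.2]
      have hm : min (1 * Real.log T) (1 - 1) = 0 := by
        rw [one_mul, sub_self]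
        exact min_eq_right (Real.log_nonneg (by exact_mod_cast hT))
      rw [hm, mul_zero]
    have h4 : ∑ t ∈ Finset.Icc 1 T, ∑ a, (-(u a) + 1 / (A:ℝ)) * ℓ t a = 0 := by
      apply Finset.sum_eq_zero; intro t _
      rw [hsum1, hu1, ← hA1]; norm_num
    have h3 : 0 ≤ ∑ t ∈ Finset.Icc 1 T, ∑ a, η t a * p t a * ℓ t a ^ 2 := by
      apply Finset.sum_nonneg; intro t ht
      rw [Finset.mem_Icc] at ht
      apply Finset.sum_nonneg; intro a _
      have h5 := hη_pos t ht.2 a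
      have h6 := hp_pos t ht.1 ht.2 a
      positivity
    rw [hLHS, h2, h4, ← hA1]
    norm_num
    linarith
  · -- 2 ≤ A
    -- ============ main case: 2 ≤ A ============
    have hT2 : 2 ≤ T := le_trans hA2 hAT
    obtain ⟨N, rfl⟩ : ∃ N, T = N + 1 := ⟨T - 1, by omega⟩
    have hTR : (2:ℝ) ≤ ((N+1 : ℕ) : ℝ) := by exact_mod_cast hT2
    have hTpos : (0:ℝ) < ((N+1 : ℕ) : ℝ) := by linarith
    have hAR : (2:ℝ) ≤ (A:ℝ) := by exact_mod_cast hA2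
    have hATR : (A:ℝ) ≤ ((N+1 : ℕ) : ℝ) := by exact_mod_cast hAT
    have hARpos : (0:ℝ) < (A:ℝ) := by linarith
    set W : 𝒜 → ℝ := fun a => (1 - 1/((N+1 : ℕ) : ℝ)^2) * u a + (1/((N+1 : ℕ) : ℝ)^2) * (1/(A:ℝ))
      with hWdef
    have hγpos : (0:ℝ) < 1/((N+1 : ℕ) : ℝ)^2 := by positivity
    have hγle : 1/((N+1 : ℕ) : ℝ)^2 ≤ 1/4 := by
      rw [div_le_div_iff₀ (by positivity) (by norm_num)]
      nlinarith
    have hWlb : ∀ a, 1/((N+1 : ℕ) : ℝ)^3 ≤ W a := by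
      intro a
      have h1 : 0 ≤ (1 - 1/((N+1 : ℕ) : ℝ)^2) * u a :=
        mul_nonneg (by linarith) (hu_nonneg a)
      have e : (1/((N+1 : ℕ) : ℝ)^2) * (1/(A:ℝ)) = 1/(((N+1 : ℕ) : ℝ)^2 * A) := by
        field_simp
      have h2 : 1/((N+1 : ℕ) : ℝ)^3 ≤ (1/((N+1 : ℕ) : ℝ)^2) * (1/(A:ℝ)) := by
        rw [e]
        apply one_div_le_one_div_of_le (by positivity)
        calc ((N+1 : ℕ) : ℝ)^2 * A ≤ ((N+1 : ℕ) : ℝ)^2 * ((N+1 : ℕ) : ℝ) := by nlinarith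
          _ = ((N+1 : ℕ) : ℝ)^3 := by ring
      rw [hWdef]; dsimp only; linarith
    have hWpos : ∀ a, 0 < W a := fun a => lt_of_lt_of_le (by positivity) (hWlb a)
    have hWub : ∀ a, W a ≤ 1 - (1/((N+1 : ℕ) : ℝ)^2)/2 := by
      intro a
      have hua : u a ≤ 1 := by
        rw [← hu_sum]
        exact Finset.single_le_sum (fun b _ => hu_nonneg b) (Finset.mem_univ a)
      have h2 : (1/((N+1 : ℕ) : ℝ)^2) * (1/(A:ℝ)) ≤ (1/((N+1 : ℕ) : ℝ)^2) * (1/2) := by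
        apply mul_le_mul_of_nonneg_left _ hγpos.le
        apply one_div_le_one_div_of_le (by norm_num) hAR
      have h3 : (1 - 1/((N+1 : ℕ) : ℝ)^2) * u a ≤ 1 - 1/((N+1 : ℕ) : ℝ)^2 := by nlinarith
      rw [hWdef]; dsimp only; linarith
    have hWsum : ∑ a, W a = 1 := by
      rw [hWdef]; dsimp only
      rw [Finset.sum_add_distrib, ← Finset.mul_sum, hu_sum, Finset.sum_const,
        Finset.card_univ, hA, nsmul_eq_mul]
      field_simp
      ring
    -- ============ bracket inequality ============
    have hbr : ∀ m : ℕ, m + 2 ≤ N + 1 →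
        ((∑ a, p (m+1) a * (∑ τ ∈ Finset.Icc 1 m, ℓ τ a)) + ψ (m+1) (p (m+1)))
            + ∑ a, p (m+1) a * ℓ (m+1) a
          ≤ ((∑ a, p (m+2) a * (∑ τ ∈ Finset.Icc 1 (m+1), ℓ τ a)) + ψ (m+2) (p (m+2)))
            + (∑ a, η (m+1) a * p (m+1) a * ℓ (m+1) a ^ 2)
            + ∑ a, (1/η (m+2) a - 1/η (m+1) a) * (-(p (m+2) a * Real.log (p (m+2) a))) := by
      intro m hm
      have h1T : m + 1 ≤ N + 1 := by omega
      have hp1 := hp_pos (m+1) (by omega) h1T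
      have hp2 := hp_pos (m+2) (by omega) hm
      have hopt := aux_opt (fun a => ∑ τ ∈ Finset.Icc 1 m, ℓ τ a) (fun a => 1/η (m+1) a)
        (p (m+1)) (p (m+2)) (fun a => by have := hη_pos (m+1) h1T a; positivity)
        hp1 (hp_sum (m+1) (by omega) h1T) (fun a => (hp2 a).le) (hp_sum (m+2) (by omega) hm)
        (fun r hr0 hr1 => by
          have h := hp_min (m+1) (by omega) h1T r hr0 hr1
          simp only [Nat.add_sub_cancel, hψ'] at h
          exact h)
      have hstab : ∑ a, ((p (m+1) a - p (m+2) a) * ℓ (m+1) a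
            - (1/η (m+1) a) * (p (m+2) a * (Real.log (p (m+2) a) - Real.log (p (m+1) a))
              - p (m+2) a + p (m+1) a))
          ≤ ∑ a, η (m+1) a * p (m+1) a * ℓ (m+1) a ^ 2 :=
        Finset.sum_le_sum (fun a _ => aux_stab _ _ _ _ (hp1 a) (hp2 a).le
          (hη_pos (m+1) h1T a) (hℓ (m+1) (by omega) h1T a))
      have e1 : ∑ a, p (m+2) a * (∑ τ ∈ Finset.Icc 1 (m+1), ℓ τ a)
          = (∑ a, p (m+2) a * (∑ τ ∈ Finset.Icc 1 m, ℓ τ a)) + ∑ a, p (m+2) a * ℓ (m+1) a := by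
        rw [← Finset.sum_add_distrib]
        refine Finset.sum_congr rfl (fun a _ => ?_)
        rw [Finset.sum_Icc_succ_top (by omega : 1 ≤ m + 1)]
        ring
      have e2 : ∑ a, (1/η (m+2) a - 1/η (m+1) a) * (-(p (m+2) a * Real.log (p (m+2) a)))
          = (∑ a, (1/η (m+1) a) * (p (m+2) a * Real.log (p (m+2) a)))
            - ∑ a, (1/η (m+2) a) * (p (m+2) a * Real.log (p (m+2) a)) := by
        rw [← Finset.sum_sub_distrib]
        exact Finset.sum_congr rfl (fun a _ => by ring)
      have e3 : ∑ a, ((p (m+1) a - p (m+2) a) * ℓ (m+1) a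
            - (1/η (m+1) a) * (p (m+2) a * (Real.log (p (m+2) a) - Real.log (p (m+1) a))
              - p (m+2) a + p (m+1) a))
          = ((∑ a, p (m+1) a * ℓ (m+1) a) - ∑ a, p (m+2) a * ℓ (m+1) a)
            - ∑ a, (1/η (m+1) a) * (p (m+2) a * (Real.log (p (m+2) a) - Real.log (p (m+1) a))
              - p (m+2) a + p (m+1) a) := by
        rw [sub_sub, ← Finset.sum_add_distrib, ← Finset.sum_sub_distrib]
        exact Finset.sum_congr rfl (fun a _ => by ring)
      rw [e3] at hstab
      simp only [hψ'] at hopt ⊢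
      rw [e1, e2]
      linarith
    -- ============ induction claim ============
    have claim : ∀ m : ℕ, m + 1 ≤ N + 1 →
        ∑ τ ∈ Finset.Icc 1 m, ∑ a, p τ a * ℓ τ a
          ≤ ((∑ a, p (m+1) a * (∑ τ ∈ Finset.Icc 1 m, ℓ τ a)) + ψ (m+1) (p (m+1)))
            + (∑ τ ∈ Finset.Icc 1 m, ∑ a, η τ a * p τ a * ℓ τ a ^ 2)
            + (∑ τ ∈ Finset.Icc 2 (m+1), ∑ a,
                (1/η τ a - 1/η (τ-1) a) * (-(p τ a * Real.log (p τ a))))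
            - ψ 1 (p 1) := by
      intro m
      induction m with
      | zero =>
          intro _
          rw [show Finset.Icc 1 0 = ∅ from rfl, show Finset.Icc 2 1 = ∅ from rfl]
          simp
      | succ n ih =>
          intro h
          have ih' := ih (by omega)
          have hb := hbr n h
          rw [Finset.sum_Icc_succ_top (by omega : 1 ≤ n + 1)
              (fun τ => ∑ a, p τ a * ℓ τ a),
            Finset.sum_Icc_succ_top (by omega : 1 ≤ n + 1)
              (fun τ => ∑ a, η τ a * p τ a * ℓ τ a ^ 2),
            Finset.sum_Icc_succ_top (by omega : 2 ≤ n + 1 + 1)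
              (fun τ => ∑ a, (1/η τ a - 1/η (τ-1) a) * (-(p τ a * Real.log (p τ a))))]
          simp only [Nat.add_sub_cancel]
          linarith
    -- ============ final-round bracket with comparator W ============
    have hfin : ((∑ a, p (N+1) a * (∑ τ ∈ Finset.Icc 1 N, ℓ τ a)) + ψ (N+1) (p (N+1)))
          + ∑ a, p (N+1) a * ℓ (N+1) a
        ≤ ((∑ a, W a * (∑ τ ∈ Finset.Icc 1 (N+1), ℓ τ a)) + ψ (N+1) W)
          + ∑ a, η (N+1) a * p (N+1) a * ℓ (N+1) a ^ 2 := by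
      have hp1 := hp_pos (N+1) (by omega) le_rfl
      have hopt := aux_opt (fun a => ∑ τ ∈ Finset.Icc 1 N, ℓ τ a) (fun a => 1/η (N+1) a)
        (p (N+1)) W (fun a => by have := hη_pos (N+1) le_rfl a; positivity)
        hp1 (hp_sum (N+1) (by omega) le_rfl) (fun a => (hWpos a).le) hWsum
        (fun r hr0 hr1 => by
          have h := hp_min (N+1) (by omega) le_rfl r hr0 hr1
          simp only [Nat.add_sub_cancel, hψ'] at h
          exact h)
      have hstab : ∑ a, ((p (N+1) a - W a) * ℓ (N+1) a
            - (1/η (N+1) a) * (W a * (Real.log (W a) - Real.log (p (N+1) a))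
              - W a + p (N+1) a))
          ≤ ∑ a, η (N+1) a * p (N+1) a * ℓ (N+1) a ^ 2 :=
        Finset.sum_le_sum (fun a _ => aux_stab _ _ _ _ (hp1 a) (hWpos a).le
          (hη_pos (N+1) le_rfl a) (hℓ (N+1) (by omega) le_rfl a))
      have e1 : ∑ a, W a * (∑ τ ∈ Finset.Icc 1 (N+1), ℓ τ a)
          = (∑ a, W a * (∑ τ ∈ Finset.Icc 1 N, ℓ τ a)) + ∑ a, W a * ℓ (N+1) a := by
        rw [← Finset.sum_add_distrib]
        refine Finset.sum_congr rfl (fun a _ => ?_)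
        rw [Finset.sum_Icc_succ_top (by omega : 1 ≤ N + 1)]
        ring
      have e3 : ∑ a, ((p (N+1) a - W a) * ℓ (N+1) a
            - (1/η (N+1) a) * (W a * (Real.log (W a) - Real.log (p (N+1) a))
              - W a + p (N+1) a))
          = ((∑ a, p (N+1) a * ℓ (N+1) a) - ∑ a, W a * ℓ (N+1) a)
            - ∑ a, (1/η (N+1) a) * (W a * (Real.log (W a) - Real.log (p (N+1) a))
              - W a + p (N+1) a) := by
        rw [sub_sub, ← Finset.sum_add_distrib, ← Finset.sum_sub_distrib]
        exact Finset.sum_congr rfl (fun a _ => by ring)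
      rw [e3] at hstab
      simp only [hψ'] at hopt ⊢
      rw [e1]
      linarith
    -- ============ combine claim with final bracket ============
    have S1 : ∑ τ ∈ Finset.Icc 1 (N+1), ∑ a, p τ a * ℓ τ a
        ≤ (∑ a, W a * (∑ τ ∈ Finset.Icc 1 (N+1), ℓ τ a)) + ψ (N+1) W - ψ 1 (p 1)
          + (∑ τ ∈ Finset.Icc 1 (N+1), ∑ a, η τ a * p τ a * ℓ τ a ^ 2)
          + (∑ τ ∈ Finset.Icc 2 (N+1), ∑ a,
              (1/η τ a - 1/η (τ-1) a) * (-(p τ a * Real.log (p τ a)))) := by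
      have hc := claim N le_rfl
      rw [Finset.sum_Icc_succ_top (by omega : 1 ≤ N + 1)
          (fun τ => ∑ a, p τ a * ℓ τ a),
        Finset.sum_Icc_succ_top (by omega : 1 ≤ N + 1)
          (fun τ => ∑ a, η τ a * p τ a * ℓ τ a ^ 2)]
      linarith
    -- ============ entropy bound for the first regularizer ============
    have hent : -ψ 1 (p 1) ≤ Real.log A / η₀
        + ∑ a, (1/η 1 a - 1/η 0 a) * (-(p 1 a * Real.log (p 1 a))) := by
      rw [hψ']
      have h1 : ∑ a, -(p 1 a * Real.log (p 1 a)) ≤ Real.log A :=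
        aux_ent A hA hApos (p 1) (hp_pos 1 le_rfl (by omega)) (hp_sum 1 le_rfl (by omega))
      have e : -∑ a, (1/η 1 a) * (p 1 a * Real.log (p 1 a))
          = (∑ a, (1/η₀) * (-(p 1 a * Real.log (p 1 a))))
            + ∑ a, (1/η 1 a - 1/η 0 a) * (-(p 1 a * Real.log (p 1 a))) := by
        rw [← Finset.sum_add_distrib, ← Finset.sum_neg_distrib]
        refine Finset.sum_congr rfl (fun a _ => ?_)
        rw [hη_init a]; ring
      rw [e, ← Finset.mul_sum]
      have h2 : (1/η₀) * (∑ a, -(p 1 a * Real.log (p 1 a))) ≤ (1/η₀) * Real.log A :=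
        mul_le_mul_of_nonneg_left h1 (by positivity)
      have h3 : Real.log A / η₀ = (1/η₀) * Real.log A := by ring
      rw [h3]
      linarith
    -- split penalty sum: Icc 1 (N+1) = {1} ∪ Icc 2 (N+1)
    have hsplit : ∑ τ ∈ Finset.Icc 1 (N+1), ∑ a,
          (1/η τ a - 1/η (τ-1) a) * (-(p τ a * Real.log (p τ a)))
        = (∑ a, (1/η 1 a - 1/η 0 a) * (-(p 1 a * Real.log (p 1 a))))
          + ∑ τ ∈ Finset.Icc 2 (N+1), ∑ a,
              (1/η τ a - 1/η (τ-1) a) * (-(p τ a * Real.log (p τ a))) := by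
      have h1m : (1 : ℕ) ∈ Finset.Icc 1 (N+1) := Finset.mem_Icc.mpr ⟨le_rfl, by omega⟩
      rw [← Finset.add_sum_erase _ _ h1m, Finset.Icc_erase_left, ← Finset.Icc_add_one_left_eq_Ioc]
      rfl
    -- ============ penalty: h ≤ 6 ξ + slack ============
    have hcoeff : ∀ τ, 1 ≤ τ → τ ≤ N + 1 → ∀ a, 0 ≤ 1/η τ a - 1/η (τ-1) a := by
      intro τ h1 h2 a
      have hm := hη_mono τ h1 h2 a
      have hp1 := hη_pos τ h2 a
      have hp0 := hη_pos (τ-1) (by omega) a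
      have := one_div_le_one_div_of_le hp1 hm
      linarith
    have hPele : ∀ τ ∈ Finset.Icc 1 (N+1),
        ∑ a, (1/η τ a - 1/η (τ-1) a) * (-(p τ a * Real.log (p τ a)))
          ≤ (∑ a, (1/η τ a - 1/η (τ-1) a) * (6 * ξ τ a))
            + ∑ a, (1/η τ a - 1/η (τ-1) a) * (1/((N+1 : ℕ) : ℝ)^6) := by
      intro τ hτ
      rw [Finset.mem_Icc] at hτ
      rw [← Finset.sum_add_distrib]
      refine Finset.sum_le_sum (fun a _ => ?_)
      have hpa := hp_pos τ hτ.1 hτ.2 a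
      have hpa1 : p τ a ≤ 1 := by
        rw [← hp_sum τ hτ.1 hτ.2]
        exact Finset.single_le_sum (fun b _ => (hp_pos τ hτ.1 hτ.2 b).le) (Finset.mem_univ a)
      have hpen := aux_pen (N+1) hT2 (p τ a) hpa hpa1
      rw [← hξ τ a] at hpen
      calc (1/η τ a - 1/η (τ-1) a) * (-(p τ a * Real.log (p τ a)))
          ≤ (1/η τ a - 1/η (τ-1) a) * (6 * ξ τ a + 1/((N+1 : ℕ) : ℝ)^6) :=
            mul_le_mul_of_nonneg_left hpen (hcoeff τ hτ.1 hτ.2 a)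
        _ = (1/η τ a - 1/η (τ-1) a) * (6 * ξ τ a)
            + (1/η τ a - 1/η (τ-1) a) * (1/((N+1 : ℕ) : ℝ)^6) := by ring
    have h6e : ∀ τ ∈ Finset.Icc 1 (N+1), ∑ a, (1/η τ a - 1/η (τ-1) a) * (6 * ξ τ a)
        = 6 * ∑ a, (1/η τ a - 1/η (τ-1) a) * ξ τ a := by
      intro τ _
      rw [Finset.mul_sum]
      exact Finset.sum_congr rfl (fun a _ => by ring)
    have htel : ∑ τ ∈ Finset.Icc 1 (N+1), ∑ a, (1/η τ a - 1/η (τ-1) a) * (1/((N+1:ℕ):ℝ)^6)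
        = ∑ a, (1/η (N+1) a - 1/η 0 a) * (1/((N+1:ℕ):ℝ)^6) := by
      rw [Finset.sum_comm]
      refine Finset.sum_congr rfl (fun a _ => ?_)
      rw [← Finset.sum_mul, aux_tel (fun t => 1/η t a) (N+1)]
    have hslack : (∑ a, (1/η (N+1) a - 1/η 0 a) * (1/((N+1:ℕ):ℝ)^6)) + ψ (N+1) W ≤ 0 := by
      rw [hψ', ← Finset.sum_add_distrib]
      apply Finset.sum_nonpos
      intro a _
      have hβpos : 0 < 1/η (N+1) a := by have := hη_pos (N+1) le_rfl a; positivity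
      have hβ0pos : 0 < 1/η 0 a := by have := hη_pos 0 (by omega) a; positivity
      have h1 : W a * (1 - W a) ≤ -(W a * Real.log (W a)) := aux_nh_ge (W a) (hWpos a)
      have h2 : (1/((N+1:ℕ):ℝ)^3) * ((1/((N+1:ℕ):ℝ)^2)/2) ≤ W a * (1 - W a) := by
        apply mul_le_mul (hWlb a) ?_ (by positivity) (hWpos a).le
        have := hWub a; linarith
      have h3 : 1/((N+1:ℕ):ℝ)^6 ≤ (1/((N+1:ℕ):ℝ)^3) * ((1/((N+1:ℕ):ℝ)^2)/2) := by
        have e : (1/((N+1:ℕ):ℝ)^3) * ((1/((N+1:ℕ):ℝ)^2)/2) = 1/(2*((N+1:ℕ):ℝ)^5) := by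
          field_simp
        rw [e]
        apply one_div_le_one_div_of_le (by positivity)
        have h35 : 0 ≤ ((N+1:ℕ):ℝ)^5 * (((N+1:ℕ):ℝ) - 2) :=
          mul_nonneg (by positivity) (by linarith)
        nlinarith [h35]
      have h4 : 1/((N+1:ℕ):ℝ)^6 ≤ -(W a * Real.log (W a)) := le_trans h3 (le_trans h2 h1)
      have h5 : (1/η (N+1) a) * (1/((N+1:ℕ):ℝ)^6)
          ≤ (1/η (N+1) a) * (-(W a * Real.log (W a))) :=
        mul_le_mul_of_nonneg_left h4 hβpos.le
      have h6 : 0 ≤ (1/η 0 a) * (1/((N+1:ℕ):ℝ)^6) := by positivity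
      nlinarith [h5, h6]
    have hpen : (∑ τ ∈ Finset.Icc 1 (N+1), ∑ a,
          (1/η τ a - 1/η (τ-1) a) * (-(p τ a * Real.log (p τ a)))) + ψ (N+1) W
        ≤ 6 * ∑ τ ∈ Finset.Icc 1 (N+1), ∑ a, (1/η τ a - 1/η (τ-1) a) * ξ τ a := by
      have h7 := Finset.sum_le_sum hPele
      rw [Finset.sum_add_distrib] at h7
      have h8 : ∑ τ ∈ Finset.Icc 1 (N+1), ∑ a, (1/η τ a - 1/η (τ-1) a) * (6 * ξ τ a)
          = 6 * ∑ τ ∈ Finset.Icc 1 (N+1), ∑ a, (1/η τ a - 1/η (τ-1) a) * ξ τ a := by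
        rw [Finset.mul_sum]
        exact Finset.sum_congr rfl h6e
      rw [h8, htel] at h7
      linarith [hslack]
    have hWsum2 : ∑ t ∈ Finset.Icc 1 (N+1), ∑ a, W a * ℓ t a
        = ∑ a, W a * (∑ τ ∈ Finset.Icc 1 (N+1), ℓ τ a) := by
      rw [Finset.sum_comm]
      exact Finset.sum_congr rfl (fun a _ => (Finset.mul_sum _ _ _).symm)
    have hmain : ∑ t ∈ Finset.Icc 1 (N+1), ∑ a, (p t a - W a) * ℓ t a
        ≤ Real.log A / η₀
          + 6 * ∑ t ∈ Finset.Icc 1 (N+1), ∑ a, (1/η t a - 1/η (t-1) a) * ξ t a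
          + ∑ t ∈ Finset.Icc 1 (N+1), ∑ a, η t a * p t a * ℓ t a ^ 2 := by
      have e : ∑ t ∈ Finset.Icc 1 (N+1), ∑ a, (p t a - W a) * ℓ t a
          = (∑ t ∈ Finset.Icc 1 (N+1), ∑ a, p t a * ℓ t a)
            - ∑ t ∈ Finset.Icc 1 (N+1), ∑ a, W a * ℓ t a := by
        rw [← Finset.sum_sub_distrib]
        refine Finset.sum_congr rfl (fun t _ => ?_)
        rw [← Finset.sum_sub_distrib]
        exact Finset.sum_congr rfl (fun a _ => by ring)
      rw [e, hWsum2]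
      linarith [S1, hent, hsplit, hpen]
    have hdec : ∀ t a, (p t a - u a) * ℓ t a
        = (p t a - W a) * ℓ t a + (1/((N+1:ℕ):ℝ)^2) * ((-(u a) + 1/(A:ℝ)) * ℓ t a) := by
      intro t a
      rw [hWdef]; dsimp only; ring
    have efin : ∑ t ∈ Finset.Icc 1 (N+1), ∑ a, (p t a - u a) * ℓ t a
        = (∑ t ∈ Finset.Icc 1 (N+1), ∑ a, (p t a - W a) * ℓ t a)
          + (1/((N+1:ℕ):ℝ)^2) * ∑ t ∈ Finset.Icc 1 (N+1), ∑ a, (-(u a) + 1/(A:ℝ)) * ℓ t a := by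
      rw [Finset.mul_sum, ← Finset.sum_add_distrib]
      refine Finset.sum_congr rfl (fun t _ => ?_)
      rw [Finset.mul_sum, ← Finset.sum_add_distrib]
      exact Finset.sum_congr rfl (fun a _ => hdec t a)
    rw [efin]
    linarith [hmain]
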